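/- Let U ⊂ ℝⁿ be an open star-shaped set centered at the origin and let φ: U → ℂ be a C¹ function. Define ψ(x) = ∫₀¹ t·φ(tx) dt. Then ψ is C¹ on U and satisfies (E + 2)ψ = φ, where E = Σᵢ xᵢ ∂/∂xᵢ is the Euler operator; that is, Σᵢ xᵢ ∂ψ/∂xᵢ(x) + 2ψ(x) = φ(x) for all x ∈ U. -/

import Mathlib

noncomputable section

/-- Partial derivative in the i-th coordinate direction on ℝⁿ. -/
noncomputable def pdn {n : ℕ} (i : Fin n) (f : (Fin n → ℝ) → ℂ) : (Fin n → ℝ) → ℂ :=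
  fun x => fderiv ℝ f x (Pi.single i 1)

set_option maxHeartbeats 1000000 in
/-- on an open star-shaped set U centered at the origin, for a C¹ function φ,
the function ψ(x) = ∫₀¹ t·φ(tx) dt is C¹ and satisfies (E + 2)ψ = φ,
where E = Σᵢ xᵢ ∂/∂xᵢ is the Euler operator. -/
theorem stmt13 (n : ℕ) (U : Set (Fin n → ℝ)) (hU : IsOpen U)
    (hstar : ∀ x ∈ U, ∀ t : ℝ, t ∈ Set.Icc (0 : ℝ) 1 → t • x ∈ U)
    (φ : (Fin n → ℝ) → ℂ) (hφ : ContDiffOn ℝ 1 φ U) :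
    ContDiffOn ℝ 1 (fun x => ∫ t in (0 : ℝ)..1, (t : ℂ) * φ (t • x)) U ∧
    ∀ x ∈ U,
      (∑ i : Fin n, (x i : ℂ) *
          pdn i (fun y => ∫ t in (0 : ℝ)..1, (t : ℂ) * φ (t • y)) x) +
        2 * (∫ t in (0 : ℝ)..1, (t : ℂ) * φ (t • x)) = φ x := by
  have hφd : ∀ y ∈ U, HasFDerivAt φ (fderiv ℝ φ y) y := fun y hy =>
    ((hφ.differentiableOn one_ne_zero).differentiableAt (hU.mem_nhds hy)).hasFDerivAt
  have hφc : ContinuousOn φ U := hφ.continuousOn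
  have hDc : ContinuousOn (fun y => fderiv ℝ φ y) U :=
    hφ.continuousOn_fderiv_of_isOpen hU le_rfl
  set F' : (Fin n → ℝ) → ℝ → ((Fin n → ℝ) →L[ℝ] ℂ) := fun x t =>
    ((t : ℂ) ^ 2) • fderiv ℝ φ (t • x) with hF'def
  have hIoc : Set.uIoc (0:ℝ) 1 = Set.Ioc 0 1 := Set.uIoc_of_le zero_le_one
  have hsmulc : ∀ x : Fin n → ℝ, Continuous fun t : ℝ => t • x := fun x =>
    continuous_id.smul continuous_const
  have main : ∀ x₀ ∈ U,
      HasFDerivAt (fun x => ∫ t in (0:ℝ)..1, (t:ℂ) * φ (t • x))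
        (∫ t in (0:ℝ)..1, F' x₀ t) x₀ ∧
      ContinuousAt (fun x => ∫ t in (0:ℝ)..1, F' x t) x₀ := by
    intro x₀ hx₀
    set S := (fun t : ℝ => t • x₀) '' Set.Icc 0 1 with hSdef
    have hSc : IsCompact S := isCompact_Icc.image (hsmulc x₀)
    have hSU : S ⊆ U := by rintro y ⟨t, ht, rfl⟩; exact hstar x₀ hx₀ t ht
    obtain ⟨ε, εpos, hεU⟩ := hSc.exists_cthickening_subset_open hU hSU
    have hKV : ∀ x ∈ Metric.closedBall x₀ ε, ∀ t ∈ Set.Icc (0:ℝ) 1,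
        t • x ∈ Metric.cthickening ε S := by
      intro x hx t ht
      apply Metric.mem_cthickening_of_dist_le (t • x) (t • x₀) ε S ⟨t, ht, rfl⟩
      rw [dist_smul₀]
      calc ‖t‖ * dist x x₀ ≤ 1 * ε := by
            apply mul_le_mul _ (Metric.mem_closedBall.mp hx) dist_nonneg zero_le_one
            rw [Real.norm_eq_abs, abs_le]; exact ⟨by linarith [ht.1], ht.2⟩
        _ = ε := one_mul ε
    have hK : ∀ x ∈ Metric.closedBall x₀ ε, ∀ t ∈ Set.Icc (0:ℝ) 1, t • x ∈ U :=
      fun x hx t ht => hεU (hKV x hx t ht)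
    obtain ⟨C, hC⟩ := hSc.cthickening.exists_bound_of_continuousOn (hDc.mono hεU)
    have hFmeas : ∀ x ∈ Metric.closedBall x₀ ε,
        MeasureTheory.AEStronglyMeasurable (fun t : ℝ => (t:ℂ) * φ (t • x))
          (MeasureTheory.volume.restrict (Set.uIoc (0:ℝ) 1)) := by
      intro x hx
      rw [hIoc]
      apply ContinuousOn.aestronglyMeasurable _ measurableSet_Ioc
      exact (Complex.continuous_ofReal.continuousOn).mul
        (hφc.comp (hsmulc x).continuousOn fun t ht => hK x hx t ⟨le_of_lt ht.1, ht.2⟩)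
    have hF'meas : ∀ x ∈ Metric.closedBall x₀ ε,
        MeasureTheory.AEStronglyMeasurable (fun t : ℝ => F' x t)
          (MeasureTheory.volume.restrict (Set.uIoc (0:ℝ) 1)) := by
      intro x hx
      rw [hIoc]
      apply ContinuousOn.aestronglyMeasurable _ measurableSet_Ioc
      exact ((Complex.continuous_ofReal.pow 2).continuousOn).smul
        (hDc.comp (hsmulc x).continuousOn fun t ht => hK x hx t ⟨le_of_lt ht.1, ht.2⟩)
    have hbound : ∀ t ∈ Set.uIoc (0:ℝ) 1, ∀ x ∈ Metric.ball x₀ ε, ‖F' x t‖ ≤ |C| := by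
      intro t ht x hx
      rw [hIoc] at ht
      have h1 : ‖F' x t‖ = |t|^2 * ‖fderiv ℝ φ (t • x)‖ := by
        have hns := norm_smul ((t:ℂ)^2) (fderiv ℝ φ (t • x))
        simp only [hF'def]
        rw [hns, norm_pow, Complex.norm_real, Real.norm_eq_abs]
      have h2 : ‖fderiv ℝ φ (t • x)‖ ≤ C :=
        hC _ (hKV x (Metric.ball_subset_closedBall hx) t ⟨le_of_lt ht.1, ht.2⟩)
      have h3 : |t| ≤ 1 := abs_le.mpr ⟨by linarith [ht.1], ht.2⟩
      have h4 : |t|^2 ≤ 1 := by nlinarith [abs_nonneg t]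
      rw [h1]
      calc |t|^2 * ‖fderiv ℝ φ (t • x)‖ ≤ 1 * C :=
            mul_le_mul h4 h2 (norm_nonneg _) zero_le_one
        _ ≤ |C| := by simpa using le_abs_self C
    have hdiff : ∀ t ∈ Set.uIoc (0:ℝ) 1, ∀ x ∈ Metric.ball x₀ ε,
        HasFDerivAt (fun x => (t:ℂ) * φ (t • x)) (F' x t) x := by
      intro t ht x hx
      rw [hIoc] at ht
      have h0 : HasFDerivAt (fun y : Fin n → ℝ => t • y)
          (t • ContinuousLinearMap.id ℝ (Fin n → ℝ)) x :=
        (t • ContinuousLinearMap.id ℝ (Fin n → ℝ)).hasFDerivAt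
      have h1 := ((hφd _ (hK x (Metric.ball_subset_closedBall hx) t
        ⟨le_of_lt ht.1, ht.2⟩)).comp x h0).const_mul ((t:ℂ))
      refine h1.congr_fderiv ?_
      ext v
      simp only [hF'def, ContinuousLinearMap.smul_apply, ContinuousLinearMap.coe_smul',
        Pi.smul_apply, ContinuousLinearMap.coe_comp', Function.comp_apply,
        ContinuousLinearMap.coe_id', id_eq, map_smul, Complex.real_smul, smul_eq_mul]
      ring
    have hFint : IntervalIntegrable (fun t : ℝ => (t:ℂ) * φ (t • x₀)) MeasureTheory.volume 0 1 := by
      apply ContinuousOn.intervalIntegrable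
      rw [Set.uIcc_of_le zero_le_one]
      exact (Complex.continuous_ofReal.continuousOn).mul
        (hφc.comp (hsmulc x₀).continuousOn fun t ht => hstar x₀ hx₀ t ht)
    constructor
    · apply hasFDerivAt_integral_of_dominated_of_fderiv_le'' (Metric.ball_mem_nhds x₀ εpos)
        (Filter.eventually_of_mem (Metric.closedBall_mem_nhds x₀ εpos) hFmeas)
        hFint
        (hF'meas x₀ (Metric.mem_closedBall_self εpos.le))
        ((MeasureTheory.ae_restrict_mem measurableSet_uIoc).mono fun t ht => hbound t ht)
        intervalIntegrable_const
        ((MeasureTheory.ae_restrict_mem measurableSet_uIoc).mono fun t ht => hdiff t ht)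
    · have hcont : ∀ t ∈ Set.uIoc (0:ℝ) 1, ContinuousAt (fun x => F' x t) x₀ := by
        intro t ht
        rw [hIoc] at ht
        exact (continuousAt_const : ContinuousAt (fun _ : Fin n → ℝ => ((t:ℂ)^2)) x₀).smul
          ((hDc.continuousAt (hU.mem_nhds
              (hK x₀ (Metric.mem_closedBall_self εpos.le) t ⟨le_of_lt ht.1, ht.2⟩))).comp
            ((continuous_const_smul t).continuousAt))
      exact intervalIntegral.continuousAt_of_dominated_interval
        (Filter.eventually_of_mem (Metric.closedBall_mem_nhds x₀ εpos) hF'meas)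
        (Filter.eventually_of_mem (Metric.ball_mem_nhds x₀ εpos) fun x hx =>
          MeasureTheory.ae_of_all _ fun t ht => hbound t ht x hx)
        intervalIntegrable_const
        (MeasureTheory.ae_of_all _ hcont)
  have hψd : ∀ x ∈ U, HasFDerivAt (fun x => ∫ t in (0:ℝ)..1, (t:ℂ) * φ (t • x))
      (∫ t in (0:ℝ)..1, F' x t) x := fun x hx => (main x hx).1
  have hψ'c : ContinuousOn (fun x => ∫ t in (0:ℝ)..1, F' x t) U :=
    fun x hx => ((main x hx).2).continuousWithinAt
  constructor
  · rw [show (1 : WithTop ℕ∞) = 0 + 1 by norm_num,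
      contDiffOn_succ_iff_fderiv_of_isOpen hU]
    refine ⟨fun x hx => (hψd x hx).differentiableAt.differentiableWithinAt,
      by simp, ?_⟩
    rw [contDiffOn_zero]
    exact hψ'c.congr fun x hx => (hψd x hx).fderiv
  · intro x hx
    have hfd : fderiv ℝ (fun y => ∫ t in (0:ℝ)..1, (t:ℂ) * φ (t • y)) x
        = ∫ t in (0:ℝ)..1, F' x t := (hψd x hx).fderiv
    have hsub : ∀ t ∈ Set.uIcc (0:ℝ) 1, t • x ∈ U := by
      rw [Set.uIcc_of_le zero_le_one]; exact fun t ht => hstar x hx t ht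
    have I1 : IntervalIntegrable (fun t : ℝ => (t:ℂ) * φ (t • x)) MeasureTheory.volume 0 1 :=
      ((Complex.continuous_ofReal.continuousOn).mul
        (hφc.comp (hsmulc x).continuousOn hsub)).intervalIntegrable
    have I2' : IntervalIntegrable (fun t : ℝ => F' x t) MeasureTheory.volume 0 1 :=
      (((Complex.continuous_ofReal.pow 2).continuousOn).smul
        (hDc.comp (hsmulc x).continuousOn hsub)).intervalIntegrable
    have I2 : IntervalIntegrable (fun t : ℝ => (t:ℂ)^2 * (fderiv ℝ φ (t • x) x))
        MeasureTheory.volume 0 1 := by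
      apply ContinuousOn.intervalIntegrable
      exact ((Complex.continuous_ofReal.pow 2).continuousOn).mul
        ((hDc.comp (hsmulc x).continuousOn hsub).clm_apply continuousOn_const)
    have happ : (∫ t in (0:ℝ)..1, F' x t) x
        = ∫ t in (0:ℝ)..1, (t:ℂ)^2 * (fderiv ℝ φ (t • x) x) := by
      rw [ContinuousLinearMap.intervalIntegral_apply I2']
      congr 1
    have hx_eq : x = ∑ i, x i • (Pi.single i 1 : Fin n → ℝ) := by
      funext j
      rw [Finset.sum_apply]
      simp [Pi.single_apply, mul_ite, Finset.sum_ite_eq]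
    have hL : ∀ L : (Fin n → ℝ) →L[ℝ] ℂ,
        (∑ i : Fin n, (x i : ℂ) * L (Pi.single i 1)) = L x := by
      intro L
      conv_rhs => rw [hx_eq]
      rw [map_sum]
      exact Finset.sum_congr rfl fun i _ => by rw [map_smul, Complex.real_smul]
    have hsum : (∑ i : Fin n, (x i : ℂ) *
          pdn i (fun y => ∫ t in (0:ℝ)..1, (t:ℂ) * φ (t • y)) x)
        = (∫ t in (0:ℝ)..1, F' x t) x := by
      simp only [pdn, hfd]
      exact hL _
    have hderiv : ∀ t ∈ Set.uIcc (0:ℝ) 1, HasDerivAt (fun s : ℝ => (s:ℂ)^2 * φ (s • x))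
        (2*(t:ℂ) * φ (t • x) + (t:ℂ)^2 * (fderiv ℝ φ (t • x) x)) t := by
      intro t ht
      have ho : HasDerivAt (fun s : ℝ => (s:ℂ)) 1 t := by
        exact Complex.ofRealCLM.hasDerivAt (x := t)
      have hp : HasDerivAt (fun s : ℝ => ((s:ℂ))^2) (2*(t:ℂ)) t := by
        have h2 := ho.mul ho
        simp only [pow_two]
        refine h2.congr_deriv ?_
        ring
      have hsm : HasDerivAt (fun s : ℝ => s • x) x t := by
        simpa using (hasDerivAt_id t).smul_const x
      have hphi : HasDerivAt (fun s : ℝ => φ (s • x)) (fderiv ℝ φ (t • x) x) t :=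
        (hφd _ (hsub t ht)).comp_hasDerivAt t hsm
      exact hp.mul hphi
    have hint : IntervalIntegrable
        (fun t : ℝ => 2*(t:ℂ) * φ (t • x) + (t:ℂ)^2 * (fderiv ℝ φ (t • x) x))
        MeasureTheory.volume 0 1 := by
      refine IntervalIntegrable.add ?_ I2
      simpa [mul_assoc] using I1.const_mul (2:ℂ)
    have hFTC := intervalIntegral.integral_eq_sub_of_hasDerivAt hderiv hint
    rw [intervalIntegral.integral_add (by simpa [mul_assoc] using I1.const_mul (2:ℂ)) I2]
      at hFTC
    have h2 : (∫ t in (0:ℝ)..1, 2*(t:ℂ) * φ (t • x))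
        = 2 * ∫ t in (0:ℝ)..1, (t:ℂ) * φ (t • x) := by
      rw [← intervalIntegral.integral_const_mul]
      congr 1; ext t; ring
    rw [h2] at hFTC
    simp only [one_smul, Complex.ofReal_one, one_pow, one_mul, Complex.ofReal_zero,
      zero_smul, zero_pow, zero_mul, sub_zero, ne_eq, OfNat.ofNat_ne_zero,
      not_false_eq_true] at hFTC
    rw [hsum, happ]
    linear_combination hFTC
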